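/- Let μ ≥ 0, L > 0, and let f : V → ℝ be differentiable, μ-convex, with L-Lipschitz gradient and global minimizer x*. Let γ₀ > 0, x₀, v₀ ∈ V, and generate sequences by: α_k = √(γ_k/L), β_k = 1/(Lα_k), (x_{k+1} - x_k)/α_k = v_k - x_{k+1} - β_k∇f(x_k), (v_{k+1} - v_k)/α_k = (μ/γ_k)(x_{k+1} - v_{k+1}) - (1/γ_k)∇f(x_{k+1}), (γ_{k+1} - γ_k)/α_k = μ - γ_{k+1}. Define λ₀ = 1, λ_k = ∏_{i=0}^{k-1} 1/(1+α_i) and L₀ = f(x₀) - f(x*) + (γ₀/2)‖v₀ - x*‖². Then for every k ≥ 0, ‖∇f(x_k)‖² ≤ 2L·λ_k·L₀. -/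

import Mathlib

open scoped RealInnerProductSpace

private lemma hnag_descent {V : Type*} [NormedAddCommGroup V] [InnerProductSpace ℝ V]
    [CompleteSpace V]
    (L : ℝ) (hL : 0 < L) (f : V → ℝ) (f' : V → V)
    (hdiff : ∀ z, HasGradientAt f (f' z) z)
    (hlip : ∀ z w : V, ‖f' z - f' w‖ ≤ L * ‖z - w‖)
    (z w : V) : f w ≤ f z + ⟪f' z, w - z⟫ + L / 2 * ‖w - z‖ ^ 2 := by
  set d := w - z with hd
  have hcontf' : Continuous f' := by
    have : LipschitzWith (Real.toNNReal L) f' := by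
      apply LipschitzWith.of_dist_le_mul
      intro a b
      simpa [dist_eq_norm, Real.coe_toNNReal _ hL.le] using hlip a b
    exact this.continuous
  have hline : ∀ t : ℝ, HasDerivAt (fun t : ℝ => z + t • d) d t := by
    intro t
    simpa using ((hasDerivAt_id t).smul_const d).const_add z
  have hg : ∀ t : ℝ, HasDerivAt (fun t : ℝ => f (z + t • d)) ⟪f' (z + t • d), d⟫ t := by
    intro t
    have := ((hdiff (z + t • d)).hasFDerivAt).comp_hasDerivAt t (hline t)
    simp at this
    exact this
  have hcontφ : Continuous (fun t : ℝ => ⟪f' (z + t • d), d⟫) := by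
    exact (hcontf'.comp (by continuity)).inner continuous_const
  have hint : IntervalIntegrable (fun t : ℝ => ⟪f' (z + t • d), d⟫) MeasureTheory.volume 0 1 :=
    hcontφ.intervalIntegrable 0 1
  have hFTC : ∫ t in (0:ℝ)..1, ⟪f' (z + t • d), d⟫ = f (z + (1:ℝ) • d) - f (z + (0:ℝ) • d) :=
    intervalIntegral.integral_eq_sub_of_hasDerivAt (fun t _ => hg t) hint
  have hmono : ∫ t in (0:ℝ)..1, (⟪f' (z + t • d), d⟫ - ⟪f' z, d⟫)
      ≤ ∫ t in (0:ℝ)..1, L * t * ‖d‖ ^ 2 := by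
    apply intervalIntegral.integral_mono_on (by norm_num)
      (hint.sub (intervalIntegrable_const)) (by apply Continuous.intervalIntegrable; continuity)
    intro t ht
    have h1 : ⟪f' (z + t • d), d⟫ - ⟪f' z, d⟫ = ⟪f' (z + t • d) - f' z, d⟫ := by
      rw [inner_sub_left]
    rw [h1]
    calc ⟪f' (z + t • d) - f' z, d⟫ ≤ ‖f' (z + t • d) - f' z‖ * ‖d‖ := real_inner_le_norm _ _
      _ ≤ (L * ‖(z + t • d) - z‖) * ‖d‖ := by
            gcongr; exact hlip _ _
      _ = L * t * ‖d‖ ^ 2 := by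
            simp [norm_smul, abs_of_nonneg ht.1]; ring
  have hval : ∫ t in (0:ℝ)..1, L * t * ‖d‖ ^ 2 = L / 2 * ‖d‖ ^ 2 := by
    have e1 : ∀ t:ℝ, L * t * ‖d‖ ^ 2 = (L * ‖d‖ ^ 2) * t := fun t => by ring
    simp only [e1]
    rw [intervalIntegral.integral_const_mul, integral_id]
    ring
  have hsplit : ∫ t in (0:ℝ)..1, (⟪f' (z + t • d), d⟫ - ⟪f' z, d⟫)
      = (∫ t in (0:ℝ)..1, ⟪f' (z + t • d), d⟫) - ⟪f' z, d⟫ := by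
    rw [intervalIntegral.integral_sub hint intervalIntegrable_const]
    simp
  have hkey : f (z + (1:ℝ) • d) - f (z + (0:ℝ) • d) - ⟪f' z, d⟫ ≤ L / 2 * ‖d‖ ^ 2 := by
    rw [← hFTC]
    linarith [hmono, hsplit.symm, hval]
  have h0 : z + (0:ℝ) • d = z := by simp
  have h1 : z + (1:ℝ) • d = w := by simp [hd]
  rw [h0, h1] at hkey
  linarith

private lemma hnag_coco {V : Type*} [NormedAddCommGroup V] [InnerProductSpace ℝ V]
    [CompleteSpace V]
    (μ L : ℝ) (hμ : 0 ≤ μ) (hL : 0 < L) (f : V → ℝ) (f' : V → V)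
    (hdiff : ∀ z, HasGradientAt f (f' z) z)
    (hconv : ∀ z w : V, f z - f w - ⟪f' w, z - w⟫ ≥ μ / 2 * ‖z - w‖ ^ 2)
    (hlip : ∀ z w : V, ‖f' z - f' w‖ ≤ L * ‖z - w‖)
    (z w : V) : f z + ⟪f' z, w - z⟫ + ‖f' w - f' z‖ ^ 2 / (2 * L) ≤ f w := by
  set u := f' w - f' z with hu
  set pt := w - L⁻¹ • u with hpt
  have hdes := hnag_descent L hL f f' hdiff hlip w pt
  have hcv := hconv pt z
  have e1 : pt - w = -(L⁻¹ • u) := by rw [hpt]; abel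
  have e2 : ⟪f' w, pt - w⟫ = -(L⁻¹ * ⟪f' w, u⟫) := by
    rw [e1, inner_neg_right, real_inner_smul_right]
  have e3 : ‖pt - w‖ ^ 2 = (L⁻¹) ^ 2 * ‖u‖ ^ 2 := by
    rw [e1, norm_neg, norm_smul, norm_inv, Real.norm_eq_abs, abs_of_nonneg hL.le]
    ring
  have e4 : pt - z = (w - z) - L⁻¹ • u := by rw [hpt]; abel
  have e5 : ⟪f' z, pt - z⟫ = ⟪f' z, w - z⟫ - L⁻¹ * ⟪f' z, u⟫ := by
    rw [e4, inner_sub_right, real_inner_smul_right]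
  have e6 : ⟪f' w, u⟫ - ⟪f' z, u⟫ = ‖u‖ ^ 2 := by
    rw [← inner_sub_left, ← hu, real_inner_self_eq_norm_sq]
  have hnn : 0 ≤ μ / 2 * ‖pt - z‖ ^ 2 := by positivity
  have hc1 : L / 2 * ((L⁻¹) ^ 2 * ‖u‖ ^ 2) = ‖u‖ ^ 2 / (2 * L) := by
    field_simp
  have hc2 : L⁻¹ * ⟪f' w, u⟫ - L⁻¹ * ⟪f' z, u⟫ = L⁻¹ * ‖u‖ ^ 2 := by
    rw [← mul_sub, e6]
  have hc3 : L⁻¹ * ‖u‖ ^ 2 - ‖u‖ ^ 2 / (2 * L) = ‖u‖ ^ 2 / (2 * L) := by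
    field_simp
    ring
  rw [e2, e3] at hdes
  rw [e5] at hcv
  linarith

private lemma hnag_key {V : Type*} [NormedAddCommGroup V] [InnerProductSpace ℝ V]
    (α γ μ L β : ℝ) (hα : 0 < α) (hγ : 0 < γ) (hμ : 0 ≤ μ) (hL : 0 < L)
    (hLa : L * α ^ 2 = γ) (hβ : β * (L * α) = 1)
    (c u p q a b : V) (ha : a = c + u) (hb : γ • (c - b) = (α * μ) • u - α • q) :
    ⟪q, α • (b - a) - (α * β) • p⟫ + α * ⟪q, a⟫ - α * μ / 2 * ‖a‖ ^ 2
      + γ * ⟪c - b, c⟫ - γ / 2 * ‖c - b‖ ^ 2 + α * μ / 2 * ‖c‖ ^ 2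
      + ‖p‖ ^ 2 / (2 * L) - ‖p - q‖ ^ 2 / (2 * L) ≤ 0 := by
  have hαne : α ≠ 0 := ne_of_gt hα
  have hLne : L ≠ 0 := ne_of_gt hL
  subst hLa
  have hγne : L * α ^ 2 ≠ 0 := ne_of_gt hγ
  have hβ' : β = (L * α)⁻¹ := eq_inv_of_mul_eq_one_left hβ
  subst hβ'
  have hcb : c - b = (α * μ / (L * α ^ 2)) • u - (α / (L * α ^ 2)) • q := by
    have h := congrArg (fun z => (L * α ^ 2)⁻¹ • z) hb
    simp only [smul_sub, smul_smul, inv_smul_smul₀ hγne] at h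
    rw [h]
    congr 2 <;> field_simp
  have hba : b - a = -(u + ((α * μ / (L * α ^ 2)) • u - (α / (L * α ^ 2)) • q)) := by
    have : b - a = -(u + (c - b)) := by rw [ha]; abel
    rw [this, hcb]
  rw [hba, hcb, ha]
  have heq : ⟪q, α • -(u + ((α * μ / (L * α ^ 2)) • u - (α / (L * α ^ 2)) • q)) - (α * (L * α)⁻¹) • p⟫
      + α * ⟪q, c + u⟫ - α * μ / 2 * ‖c + u‖ ^ 2
      + (L * α ^ 2) * ⟪(α * μ / (L * α ^ 2)) • u - (α / (L * α ^ 2)) • q, c⟫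
      - (L * α ^ 2) / 2 * ‖(α * μ / (L * α ^ 2)) • u - (α / (L * α ^ 2)) • q‖ ^ 2
      + α * μ / 2 * ‖c‖ ^ 2 + ‖p‖ ^ 2 / (2 * L) - ‖p - q‖ ^ 2 / (2 * L)
      = -(α * μ / 2 + α ^ 2 * μ ^ 2 / (2 * (L * α ^ 2))) * ⟪u, u⟫ := by
    simp only [← real_inner_self_eq_norm_sq, inner_sub_left, inner_sub_right, inner_add_left,
      inner_add_right, inner_neg_neg, inner_neg_left, inner_neg_right, real_inner_smul_left,
      real_inner_smul_right]
    rw [real_inner_comm u q, real_inner_comm p q, real_inner_comm u c]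
    field_simp
    ring
  rw [heq]
  have huu : 0 ≤ ⟪u, u⟫ := real_inner_self_nonneg
  have hcoef : 0 ≤ α * μ / 2 + α ^ 2 * μ ^ 2 / (2 * (L * α ^ 2)) := by positivity
  nlinarith


open scoped RealInnerProductSpace

set_option maxHeartbeats 1000000 in
/-- Decay of the gradient norm for the explicit HNAG scheme (Algorithm 1):
`‖∇f(x_k)‖² ≤ 2L λ_k L₀`. -/
theorem explicit_hnag_gradient_decay
    {V : Type*} [NormedAddCommGroup V] [InnerProductSpace ℝ V] [CompleteSpace V]
    (μ L : ℝ) (hμ : 0 ≤ μ) (hL : 0 < L) (f : V → ℝ) (f' : V → V)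
    (hdiff : ∀ z, HasGradientAt f (f' z) z)
    (hconv : ∀ z w : V, f z - f w - ⟪f' w, z - w⟫ ≥ μ / 2 * ‖z - w‖ ^ 2)
    (hlip : ∀ z w : V, ‖f' z - f' w‖ ≤ L * ‖z - w‖)
    (xstar : V) (hmin : ∀ z, f xstar ≤ f z)
    (x v : ℕ → V) (γ α β lam : ℕ → ℝ) (hγ0 : 0 < γ 0)
    (hαdef : ∀ k, α k = Real.sqrt (γ k / L)) (hβ : ∀ k, β k = 1 / (L * α k))
    (h1 : ∀ k, (α k)⁻¹ • (x (k + 1) - x k) = v k - x (k + 1) - β k • f' (x k))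
    (h2 : ∀ k, (α k)⁻¹ • (v (k + 1) - v k)
        = (μ / γ k) • (x (k + 1) - v (k + 1)) - (1 / γ k) • f' (x (k + 1)))
    (h3 : ∀ k, (γ (k + 1) - γ k) / α k = μ - γ (k + 1))
    (hlam : ∀ k, lam k = ∏ i ∈ Finset.range k, (1 + α i)⁻¹)
    (k : ℕ) :
    ‖f' (x k)‖ ^ 2
      ≤ 2 * L * lam k * (f (x 0) - f xstar + γ 0 / 2 * ‖v 0 - xstar‖ ^ 2) := by
  -- basic positivity facts
  have hαofγ : ∀ k, 0 < γ k → 0 < α k := by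
    intro k hk
    rw [hαdef k]
    exact Real.sqrt_pos.2 (div_pos hk hL)
  have hγrel : ∀ k, 0 < γ k → γ (k + 1) * (1 + α k) = γ k + α k * μ := by
    intro k hk
    have hαk : 0 < α k := hαofγ k hk
    have h := h3 k
    rw [div_eq_iff (ne_of_gt hαk)] at h
    nlinarith [h]
  have hγpos : ∀ k, 0 < γ k := by
    intro k
    induction k with
    | zero => exact hγ0
    | succ n ih =>
      have hαn : 0 < α n := hαofγ n ih
      have hrel := hγrel n ih
      have hpos : 0 < γ n + α n * μ := by positivity
      nlinarith [hrel, hpos, hαn]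
  have hαpos : ∀ k, 0 < α k := fun k => hαofγ k (hγpos k)
  have hα2 : ∀ k, L * α k ^ 2 = γ k := by
    intro k
    rw [hαdef k, Real.sq_sqrt (le_of_lt (div_pos (hγpos k) hL))]
    field_simp
  have hβ1 : ∀ k, β k * (L * α k) = 1 := by
    intro k
    rw [hβ k]
    have : L * α k ≠ 0 := ne_of_gt (mul_pos hL (hαpos k))
    field_simp
    exact div_self (ne_of_gt (hαpos k))
  -- one-step Lyapunov decay
  have step : ∀ k, (1 + α k) * (f (x (k + 1)) - f xstar
        + γ (k + 1) / 2 * ‖v (k + 1) - xstar‖ ^ 2) + ‖f' (x k)‖ ^ 2 / (2 * L)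
      ≤ f (x k) - f xstar + γ k / 2 * ‖v k - xstar‖ ^ 2 := by
    intro k
    have hαk : 0 < α k := hαpos k
    have hγk : 0 < γ k := hγpos k
    -- vector form of the x-update
    have V1 : x (k + 1) - x k
        = α k • ((v k - xstar) - (x (k + 1) - xstar)) - (α k * β k) • f' (x k) := by
      have h := congrArg (fun z => α k • z) (h1 k)
      simp only [smul_smul, mul_inv_cancel₀ (ne_of_gt hαk), one_smul] at h
      rw [h, smul_sub, smul_smul]
      congr 2
      abel
    -- vector form of the v-update
    have V2 : γ k • ((v (k + 1) - xstar) - (v k - xstar))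
        = (α k * μ) • (x (k + 1) - v (k + 1)) - α k • f' (x (k + 1)) := by
      have h := congrArg (fun z => α k • z) (h2 k)
      simp only [smul_smul, mul_inv_cancel₀ (ne_of_gt hαk), one_smul] at h
      have e : (v (k + 1) - xstar) - (v k - xstar) = v (k + 1) - v k := by abel
      rw [e, h, smul_sub, smul_sub, smul_smul, smul_smul, smul_smul, smul_smul]
      congr 2 <;> field_simp <;> ring
    have key := hnag_key (α k) (γ k) μ L (β k) hαk hγk hμ hL (hα2 k) (hβ1 k)
      (v (k + 1) - xstar) (x (k + 1) - v (k + 1)) (f' (x k)) (f' (x (k + 1)))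
      (x (k + 1) - xstar) (v k - xstar) (by abel) V2
    have A1 := hnag_coco μ L hμ hL f f' hdiff hconv hlip (x (k + 1)) (x k)
    have e2 : ⟪f' (x (k + 1)), x k - x (k + 1)⟫
        = -⟪f' (x (k + 1)), α k • ((v k - xstar) - (x (k + 1) - xstar))
            - (α k * β k) • f' (x k)⟫ := by
      rw [show x k - x (k + 1) = -(x (k + 1) - x k) from by abel, inner_neg_right, V1]
    have A2 := hconv xstar (x (k + 1))
    have e3a : ⟪f' (x (k + 1)), xstar - x (k + 1)⟫ = -⟪f' (x (k + 1)), x (k + 1) - xstar⟫ := by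
      rw [show xstar - x (k + 1) = -(x (k + 1) - xstar) from by abel, inner_neg_right]
    have e3b : ‖xstar - x (k + 1)‖ = ‖x (k + 1) - xstar‖ := norm_sub_rev _ _
    rw [e3a, e3b] at A2
    have A2' : f (x (k + 1)) - f xstar
        ≤ ⟪f' (x (k + 1)), x (k + 1) - xstar⟫ - μ / 2 * ‖x (k + 1) - xstar‖ ^ 2 := by
      linarith [A2]
    have A2'' := mul_le_mul_of_nonneg_left A2' hαk.le
    -- norm-difference identity, scaled by γ k
    have hin : ⟪(v (k + 1) - xstar) - (v k - xstar), v (k + 1) - xstar⟫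
        = ‖v (k + 1) - xstar‖ ^ 2 - ⟪v (k + 1) - xstar, v k - xstar⟫ := by
      rw [inner_sub_left, real_inner_self_eq_norm_sq, real_inner_comm (v k - xstar)]
    have hcb2 : ‖(v (k + 1) - xstar) - (v k - xstar)‖ ^ 2
        = ‖v (k + 1) - xstar‖ ^ 2 - 2 * ⟪v (k + 1) - xstar, v k - xstar⟫
          + ‖v k - xstar‖ ^ 2 := norm_sub_sq_real _ _
    have e4' : γ k * ⟪(v (k + 1) - xstar) - (v k - xstar), v (k + 1) - xstar⟫
          - γ k / 2 * ‖(v (k + 1) - xstar) - (v k - xstar)‖ ^ 2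
        = γ k / 2 * ‖v (k + 1) - xstar‖ ^ 2 - γ k / 2 * ‖v k - xstar‖ ^ 2 := by
      linear_combination (γ k) * hin - (γ k / 2) * hcb2
    have e5' : γ (k + 1) * (1 + α k) * ‖v (k + 1) - xstar‖ ^ 2
        = (γ k + α k * μ) * ‖v (k + 1) - xstar‖ ^ 2 := by
      rw [hγrel k hγk]
    linarith [key, A1, e2, A2'', e4', e5']
  -- the Lyapunov function is nonnegative
  have hE0 : ∀ k, 0 ≤ f (x k) - f xstar + γ k / 2 * ‖v k - xstar‖ ^ 2 := by
    intro k
    have h1 : 0 ≤ γ k / 2 * ‖v k - xstar‖ ^ 2 := mul_nonneg (by linarith [hγpos k]) (by positivity)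
    linarith [hmin (x k)]
  -- decay of the Lyapunov function
  have hdecay : ∀ k, f (x k) - f xstar + γ k / 2 * ‖v k - xstar‖ ^ 2
      ≤ lam k * (f (x 0) - f xstar + γ 0 / 2 * ‖v 0 - xstar‖ ^ 2) := by
    intro k
    induction k with
    | zero => rw [hlam]; simp
    | succ n ih =>
      have hs := step n
      have h1α : (0:ℝ) < 1 + α n := by linarith [hαpos n]
      have hp : 0 ≤ ‖f' (x n)‖ ^ 2 / (2 * L) := div_nonneg (by positivity) (by linarith)
      have hmul : (1 + α n) * (f (x (n + 1)) - f xstar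
          + γ (n + 1) / 2 * ‖v (n + 1) - xstar‖ ^ 2)
          ≤ lam n * (f (x 0) - f xstar + γ 0 / 2 * ‖v 0 - xstar‖ ^ 2) := by linarith
      have hlamS : lam (n + 1) = lam n * (1 + α n)⁻¹ := by
        rw [hlam (n + 1), hlam n, Finset.prod_range_succ]
      have h' := mul_le_mul_of_nonneg_left hmul (inv_nonneg.2 h1α.le)
      rw [← mul_assoc, inv_mul_cancel₀ (ne_of_gt h1α), one_mul] at h'
      rw [hlamS]
      calc f (x (n + 1)) - f xstar + γ (n + 1) / 2 * ‖v (n + 1) - xstar‖ ^ 2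
          ≤ (1 + α n)⁻¹ * (lam n * (f (x 0) - f xstar + γ 0 / 2 * ‖v 0 - xstar‖ ^ 2)) := h'
        _ = lam n * (1 + α n)⁻¹ * (f (x 0) - f xstar + γ 0 / 2 * ‖v 0 - xstar‖ ^ 2) := by
            ring
  -- conclude
  have hs := step k
  have h1α : (0:ℝ) < 1 + α k := by linarith [hαpos k]
  have hnn : 0 ≤ (1 + α k) * (f (x (k + 1)) - f xstar
      + γ (k + 1) / 2 * ‖v (k + 1) - xstar‖ ^ 2) := mul_nonneg h1α.le (hE0 (k + 1))
  have hfin : ‖f' (x k)‖ ^ 2 / (2 * L)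
      ≤ lam k * (f (x 0) - f xstar + γ 0 / 2 * ‖v 0 - xstar‖ ^ 2) := by
    linarith [hdecay k]
  rw [div_le_iff₀ (by positivity : (0:ℝ) < 2 * L)] at hfin
  linarith [hfin]
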